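/- Let ℓ be a one-dimensional ℝ-linear subspace of ℂ (a line through 0), let w ∈ ℂ with w ∉ ℓ, and set L = ℓ + ℤw. If H is a closed additive subgroup of ℂ with L ⊆ H and H ≠ ℂ, then there exists a positive integer n such that H = ℓ + ℤ·(w/n). -/
import Mathlib

open AddSubgroup

lemma closure_neg_singleton (x : ℝ) :
    AddSubgroup.closure {-x} = AddSubgroup.closure {x} := by
  ext t
  simp only [AddSubgroup.mem_closure_singleton]
  constructor
  · rintro ⟨m, rfl⟩; exact ⟨-m, by simp⟩
  · rintro ⟨m, rfl⟩; exact ⟨-m, by simp⟩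

/-- If `ℓ` is a line through `0` in `ℂ`, `w ∉ ℓ`, and `H` is a closed additive subgroup of `ℂ`
containing `L = ℓ + ℤw` with `H ≠ ℂ`, then `H = ℓ + ℤ(w/n)` for some positive integer `n`. -/
theorem stmt3 (ℓ : Submodule ℝ ℂ) (hℓ : Module.finrank ℝ ℓ = 1)
    (w : ℂ) (hw : w ∉ ℓ)
    (H : AddSubgroup ℂ) (hclosed : IsClosed (H : Set ℂ))
    (hsub : ℓ.toAddSubgroup ⊔ AddSubgroup.closure {w} ≤ H)
    (hne : H ≠ ⊤) :
    ∃ n : ℕ, 0 < n ∧ H = ℓ.toAddSubgroup ⊔ AddSubgroup.closure {w / (n : ℂ)} := by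
  have hw0 : w ≠ 0 := fun h => hw (h ▸ ℓ.zero_mem)
  -- ℓ and span{w} are complementary
  have htop : ℓ ⊔ Submodule.span ℝ {w} = ⊤ := by
    apply Submodule.eq_top_of_finrank_eq
    have hinf : ℓ ⊓ Submodule.span ℝ {w} = ⊥ := by
      rw [eq_bot_iff]
      rintro x hx
      rw [Submodule.mem_inf] at hx
      obtain ⟨hx1, hx2⟩ := hx
      rw [Submodule.mem_span_singleton] at hx2
      obtain ⟨t, rfl⟩ := hx2
      rcases eq_or_ne t 0 with rfl | ht
      · simp
      · have hmem := ℓ.smul_mem t⁻¹ hx1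
        rw [smul_smul, inv_mul_cancel₀ ht, one_smul] at hmem
        exact absurd hmem hw
    have h := Submodule.finrank_sup_add_finrank_inf_eq ℓ (Submodule.span ℝ {w})
    rw [hinf, hℓ, finrank_span_singleton hw0, finrank_bot, add_zero] at h
    rw [h, Complex.finrank_real_complex]
  have decomp : ∀ x : ℂ, ∃ a ∈ ℓ, ∃ t : ℝ, x = a + t • w := by
    intro x
    have hx : x ∈ ℓ ⊔ Submodule.span ℝ {w} := htop ▸ Submodule.mem_top
    rw [Submodule.mem_sup] at hx
    obtain ⟨a, ha, b, hb, rfl⟩ := hx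
    rw [Submodule.mem_span_singleton] at hb
    obtain ⟨t, rfl⟩ := hb
    exact ⟨a, ha, t, rfl⟩
  have hℓH : ℓ.toAddSubgroup ≤ H := le_trans le_sup_left hsub
  have hwH : w ∈ H := hsub (le_sup_right (a := ℓ.toAddSubgroup)
    (AddSubgroup.mem_closure_singleton.mpr ⟨1, one_smul ℤ w⟩))
  -- the subgroup of coefficients
  let f : ℝ →+ ℂ := { toFun := fun t => t • w, map_zero' := by simp,
                      map_add' := fun s t => by simp [add_smul] }
  set S : AddSubgroup ℝ := AddSubgroup.comap f H with hSdef
  have hSmem : ∀ t : ℝ, t ∈ S ↔ t • w ∈ H := fun t => Iff.rfl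
  have h1S : (1 : ℝ) ∈ S := by rw [hSmem]; simpa using hwH
  rcases AddSubgroup.dense_or_cyclic S with hd | ⟨a, hScyc⟩
  · -- dense case: H = ⊤, contradiction
    exfalso
    apply hne
    have hHdense : Dense (H : Set ℂ) := by
      intro x
      obtain ⟨a, ha, t, rfl⟩ := decomp x
      have hcont : Continuous fun s : ℝ => a + s • w := by continuity
      have ht : t ∈ _root_.closure (S : Set ℝ) := hd t
      have : a + t • w ∈ _root_.closure ((fun s : ℝ => a + s • w) '' (S : Set ℝ)) := by
        have := image_closure_subset_closure_image (s := (S : Set ℝ)) hcont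
        exact this ⟨t, ht, rfl⟩
      refine _root_.closure_mono ?_ this
      rintro y ⟨s, hs, rfl⟩
      exact H.add_mem (hℓH ha) ((hSmem s).mp hs)
    have : (H : Set ℂ) = Set.univ := by
      rw [← hclosed.closure_eq, ← dense_iff_closure_eq]; exact hHdense
    exact SetLike.ext' (by simp [this])
  · -- cyclic case
    obtain ⟨k, hk⟩ := AddSubgroup.mem_closure_singleton.mp (hScyc ▸ h1S)
    have hk0 : k ≠ 0 := by rintro rfl; simp at hk
    have ha0 : a ≠ 0 := by rintro rfl; simp at hk
    set n : ℕ := k.natAbs with hn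
    have hnpos : 0 < n := Int.natAbs_pos.mpr hk0
    have hkr : (k : ℝ) * a = 1 := by rw [← hk]; simp [zsmul_eq_mul]
    have haval : a = (k : ℝ)⁻¹ := by
      field_simp at hkr ⊢
      linarith [hkr]
    have hS' : S = AddSubgroup.closure {((n : ℝ))⁻¹} := by
      rcases lt_or_gt_of_ne hk0 with hkneg | hkpos
      · have hkn : (k : ℝ) = -(n : ℝ) := by
          rw [hn]; push_cast [Nat.cast_natAbs]
          rw [abs_of_neg (show (k:ℝ) < 0 by exact_mod_cast hkneg)]; ring
        have hae : a = -((n : ℝ))⁻¹ := by rw [haval, hkn, neg_inv]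
        rw [hScyc, hae, closure_neg_singleton]
      · have hkn : (k : ℝ) = (n : ℝ) := by
          rw [hn]; push_cast [Nat.cast_natAbs]
          rw [abs_of_pos (show (0:ℝ) < k by exact_mod_cast hkpos)]
        have hae : a = ((n : ℝ))⁻¹ := by rw [haval, hkn]
        rw [hScyc, hae]
    have hninvS : ((n : ℝ))⁻¹ ∈ S := hS' ▸ AddSubgroup.mem_closure_singleton.mpr ⟨1, one_smul ℤ _⟩
    have hwn : w / (n : ℂ) = ((n : ℝ))⁻¹ • w := by
      rw [Complex.real_smul]
      push_cast
      rw [div_eq_inv_mul]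
    refine ⟨n, hnpos, le_antisymm ?_ ?_⟩
    · intro x hx
      obtain ⟨b, hb, t, rfl⟩ := decomp x
      have htw : t • w ∈ H := by
        have := H.sub_mem hx (hℓH hb)
        simpa using this
      obtain ⟨m, hm⟩ := AddSubgroup.mem_closure_singleton.mp (hS' ▸ (hSmem t).mpr htw)
      rw [AddSubgroup.mem_sup]
      refine ⟨b, hb, m • (w / (n : ℂ)), AddSubgroup.mem_closure_singleton.mpr ⟨m, rfl⟩, ?_⟩
      rw [hwn, ← smul_assoc, hm]
    · rw [sup_le_iff]
      refine ⟨hℓH, ?_⟩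
      rw [AddSubgroup.closure_le]
      rintro y rfl
      rw [hwn]
      exact (hSmem _).mp hninvS
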